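/- Fix constants C₁ > 0, C₂ ≥ 0, ε > 0, and M ≥ 8·C₂/C₁. For each K ≥ 1 let (Z_n)_{n≥0} be the discrete-time Markov chain on ℕ with transition probabilities p(0,1) = 1 and, for i ≥ 1, p(i, i+1) = q_K(i) and p(i, i−1) = 1 − q_K(i), where q_K(i) = min(1, max(0, 1/2 − C₁·i/K + C₂·ε·σ_K)); let P_a denote its trajectory law started at a and τ_m = inf{n ≥ 0 : Z_n = m}. Then for every choice of natural numbers a_K with a_K ≤ (1/3)·M·ε·σ_K·K, one has lim_{K→∞} e^{K^{2α}} · P_{a_K}[ τ_{⌈M·ε·σ_K·K⌉} < τ_0 ] = 0. -/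

import Mathlib

open MeasureTheory ProbabilityTheory Filter Set

open Classical in
/-- The Markov chain on `ℕ` with transitions `p(0,1) = 1`, `p(i, i+1) = q i`,
`p(i, i−1) = 1 − q i` for `i ≥ 1`, driven by the i.i.d. uniform-`[0,1]` random
variables `U` and started at `a`. -/
noncomputable def chain {Ω : Type*} (q : ℕ → ℝ) (U : ℕ → Ω → ℝ) (a : ℕ) :
    ℕ → Ω → ℕ
  | 0 => fun _ => a
  | n + 1 => fun ω =>
      let z := chain q U a n ω
      if z = 0 then 1 else if U n ω < q z then z + 1 else z - 1

/-- The hitting time `τ_m = inf {n ≥ 0 : Z_n = m}` (with `inf ∅ = ∞`) of the state `m`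
by the `ℕ`-valued process `Z`. -/
noncomputable def hitTimeN {Ω : Type*} (Z : ℕ → Ω → ℕ) (m : ℕ) (ω : Ω) : ℕ∞ :=
  ⨅ (n : ℕ) (_ : Z n ω = m), (n : ℕ∞)

namespace Stmt9

open Classical in
/-- The stopped walk: absorbs at `0` and at `L`. -/
noncomputable def W {Ω : Type*} (q : ℕ → ℝ) (U : ℕ → Ω → ℝ) (a L : ℕ) : ℕ → Ω → ℕ
  | 0 => fun _ => a
  | n + 1 => fun ω =>
      let z := W q U a L n ω
      if z = 0 ∨ z = L then z else if U n ω < q z then z + 1 else z - 1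

variable {Ω : Type*} {mΩ : MeasurableSpace Ω} {q : ℕ → ℝ} {U : ℕ → Ω → ℝ} {a L : ℕ}

lemma W_le (haL : a ≤ L) : ∀ n ω, W q U a L n ω ≤ L := by
  intro n
  induction n with
  | zero => intro ω; simpa [W]
  | succ n ih =>
    intro ω
    simp only [W]
    set z := W q U a L n ω with hz
    by_cases h0 : z = 0 ∨ z = L
    · simp [h0, ih ω]
      exact ih ω
    · push_neg at h0
      have hzL : z ≤ L := ih ω
      have h1 : z + 1 ≤ L := lt_of_le_of_ne hzL h0.2
      simp only [h0.1, h0.2, or_self, if_false]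
      split_ifs <;> omega

lemma W_absorb (n : ℕ) (ω : Ω) (h : W q U a L n ω = L) : W q U a L (n + 1) ω = L := by
  simp [W, h]

lemma W_absorb_mono : Monotone (fun n => {ω : Ω | W q U a L n ω = L}) :=
  monotone_nat_of_le_succ fun n ω hω => W_absorb n ω hω

/-- Agreement of `chain` and `W` before absorption. -/
lemma W_eq_chain (n : ℕ) (ω : Ω)
    (h0 : ∀ k, k ≤ n → chain q U a k ω ≠ 0)
    (hL : ∀ k, k < n → chain q U a k ω ≠ L) :
    W q U a L n ω = chain q U a n ω := by
  induction n with
  | zero => rfl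
  | succ n ih =>
    have ihn : W q U a L n ω = chain q U a n ω :=
      ih (fun k hk => h0 k (hk.trans n.le_succ)) (fun k hk => hL k (hk.trans n.lt_succ_self))
    have hc0 : chain q U a n ω ≠ 0 := h0 n n.le_succ
    have hcL : chain q U a n ω ≠ L := hL n n.lt_succ_self
    simp only [W, chain, ihn, hc0, hcL, or_self, if_false]

variable {Ω : Type*} {Z : ℕ → Ω → ℕ} {m : ℕ} {ω : Ω}

lemma hitTimeN_le {n : ℕ} (h : Z n ω = m) : hitTimeN Z m ω ≤ n := by
  exact iInf_le_of_le n (iInf_le_of_le h le_rfl)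

lemma hitTimeN_eq_top (h : ∀ n, Z n ω ≠ m) : hitTimeN Z m ω = ⊤ := by
  simp [hitTimeN, h]

lemma le_hitTimeN {n : ℕ} (h : ∀ k, k < n → Z k ω ≠ m) : (n : ℕ∞) ≤ hitTimeN Z m ω := by
  refine le_iInf₂ fun k hk => ?_
  by_contra hlt
  push_neg at hlt
  have : k < n := by exact_mod_cast hlt
  exact h k this hk

/-- From `τ_L < τ_0` extract a witness time with the minimality properties. -/
lemma exists_first_hit {L : ℕ} (h : hitTimeN Z L ω < hitTimeN Z 0 ω) :
    ∃ n, Z n ω = L ∧ (∀ k, k < n → Z k ω ≠ L) ∧ (∀ k, k ≤ n → Z k ω ≠ 0) := by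
  have hne : ∃ n, Z n ω = L := by
    by_contra hc
    push_neg at hc
    rw [hitTimeN_eq_top hc] at h
    exact (not_top_lt h)
  classical
  let n := Nat.find hne
  have hn : Z n ω = L := Nat.find_spec hne
  have hmin : ∀ k, k < n → Z k ω ≠ L := fun k hk => Nat.find_min hne hk
  refine ⟨n, hn, hmin, fun k hk h0 => ?_⟩
  have h1 : hitTimeN Z 0 ω ≤ k := hitTimeN_le h0
  have h2 : (n : ℕ∞) ≤ hitTimeN Z L ω := le_hitTimeN hmin
  have : (n : ℕ∞) < (k : ℕ∞) := lt_of_le_of_lt h2 (lt_of_lt_of_le h h1)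
  have : n < k := by exact_mod_cast this
  omega



variable {Ω : Type*} {mΩ : MeasurableSpace Ω} {P : Measure Ω} {U : ℕ → Ω → ℝ}

/-- σ-algebra generated by `U 0, …, U (n-1)`. -/
def mb (U : ℕ → Ω → ℝ) (n : ℕ) : MeasurableSpace Ω :=
  ⨆ i ∈ {i : ℕ | i < n}, MeasurableSpace.comap (U i) inferInstance

lemma mb_le (hm : ∀ n, Measurable (U n)) (n : ℕ) : mb U n ≤ mΩ :=
  iSup₂_le fun i _ => (hm i).comap_le

lemma mb_mono : Monotone (mb U) := fun m n hmn =>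
  iSup₂_le fun i hi => le_iSup₂ (f := fun i (_ : i ∈ {i : ℕ | i < n}) =>
    MeasurableSpace.comap (U i) inferInstance) i (lt_of_lt_of_le hi hmn)

lemma comap_le_mb {n N : ℕ} (h : n < N) :
    MeasurableSpace.comap (U n) inferInstance ≤ mb U N :=
  le_iSup₂ (f := fun i (_ : i ∈ {i : ℕ | i < N}) =>
    MeasurableSpace.comap (U i) inferInstance) n h

lemma indep_mb (hm : ∀ n, Measurable (U n))
    (hi : iIndepFun U P) (n : ℕ) :
    Indep (mb U n) (MeasurableSpace.comap (U n) inferInstance) P := by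
  have h := indep_iSup_of_disjoint (m := fun i => MeasurableSpace.comap (U i) inferInstance)
    (fun i => (hm i).comap_le) hi.iIndep (S := {i : ℕ | i < n}) (T := {n})
    (by simp [Set.disjoint_left]; omega)
  refine indep_of_indep_of_le_right h ?_
  exact le_iSup₂ (f := fun i (_ : i ∈ ({n} : Set ℕ)) =>
    MeasurableSpace.comap (U i) inferInstance) n rfl

lemma measure_inter_preimage (hm : ∀ n, Measurable (U n))
    (hi : iIndepFun U P) (n : ℕ)
    {A : Set Ω} (hA : MeasurableSet[mb U n] A) {s : Set ℝ} (hs : MeasurableSet s) :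
    P (A ∩ U n ⁻¹' s) = P A * P (U n ⁻¹' s) := by
  have h := indep_mb hm hi (P := P) n
  rw [Indep_iff] at h
  exact h A _ hA ⟨s, hs, rfl⟩

lemma measure_preimage_Iio (hu : ∀ n, Measure.map (U n) P = volume.restrict (Set.Icc (0:ℝ) 1))
    (hm : ∀ n, Measurable (U n)) (n : ℕ) {c : ℝ} (hc0 : 0 ≤ c) (hc1 : c ≤ 1) :
    P (U n ⁻¹' Iio c) = ENNReal.ofReal c := by
  rw [← Measure.map_apply (hm n) measurableSet_Iio, hu n,
    Measure.restrict_apply measurableSet_Iio]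
  have : Iio c ∩ Icc (0:ℝ) 1 = Ico 0 c := by
    ext x
    simp only [mem_inter_iff, mem_Iio, mem_Icc, mem_Ico]
    constructor
    · rintro ⟨h1, h2, _⟩; exact ⟨h2, h1⟩
    · rintro ⟨h1, h2⟩; exact ⟨h2, h1, le_trans h2.le hc1⟩
  rw [this, Real.volume_Ico, sub_zero]

lemma measure_preimage_Ici (hu : ∀ n, Measure.map (U n) P = volume.restrict (Set.Icc (0:ℝ) 1))
    (hm : ∀ n, Measurable (U n)) (n : ℕ) {c : ℝ} (hc0 : 0 ≤ c) (hc1 : c ≤ 1) :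
    P (U n ⁻¹' Ici c) = ENNReal.ofReal (1 - c) := by
  rw [← Measure.map_apply (hm n) measurableSet_Ici, hu n,
    Measure.restrict_apply measurableSet_Ici]
  have : Ici c ∩ Icc (0:ℝ) 1 = Icc c 1 := by
    ext x
    simp only [mem_inter_iff, mem_Ici, mem_Icc]
    constructor
    · rintro ⟨h1, _, h3⟩; exact ⟨h1, h3⟩
    · rintro ⟨h1, h2⟩; exact ⟨h1, le_trans hc0 h1, h2⟩
  rw [this, Real.volume_Icc]




open Classical in
/-- one step of the stopped walk, as a function of current state and uniform. -/
noncomputable def stepf (q : ℕ → ℝ) (L : ℕ) (z : ℕ) (u : ℝ) : ℕ :=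
  if z = 0 ∨ z = L then z else if u < q z then z + 1 else z - 1

lemma measurable_stepf (q : ℕ → ℝ) (L z : ℕ) : Measurable (stepf q L z) := by
  unfold stepf
  by_cases h : z = 0 ∨ z = L
  · simp only [h, if_true]; exact measurable_const
  · simp only [h, if_false]
    exact Measurable.ite measurableSet_Iio measurable_const measurable_const

-- harmonic function
noncomputable def rho (q : ℕ → ℝ) (k : ℕ) : ℝ := (1 - q k) / q k

noncomputable def pifn (q : ℕ → ℝ) (j : ℕ) : ℝ := ∏ k ∈ Finset.Icc 1 j, rho q k

noncomputable def hfn (q : ℕ → ℝ) (i : ℕ) : ℝ := ∑ j ∈ Finset.range i, pifn q j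

lemma pifn_zero (q : ℕ → ℝ) : pifn q 0 = 1 := by simp [pifn]

lemma pifn_succ (q : ℕ → ℝ) (j : ℕ) : pifn q (j + 1) = pifn q j * rho q (j + 1) := by
  rw [pifn, pifn, ← Finset.prod_Icc_succ_top (by omega : 1 ≤ j + 1)]

lemma hfn_succ (q : ℕ → ℝ) (i : ℕ) : hfn q (i + 1) = hfn q i + pifn q i := by
  rw [hfn, hfn, Finset.sum_range_succ]

lemma pifn_pos {q : ℕ → ℝ} {j : ℕ} (h : ∀ k, 1 ≤ k → k ≤ j → 0 < q k ∧ q k < 1) :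
    0 < pifn q j := by
  apply Finset.prod_pos
  intro k hk
  simp only [Finset.mem_Icc] at hk
  have := h k hk.1 hk.2
  exact div_pos (by linarith [this.2]) this.1

lemma hfn_nonneg {q : ℕ → ℝ} {i L : ℕ} (hiL : i ≤ L)
    (h : ∀ k, 1 ≤ k → k < L → 0 < q k ∧ q k < 1) : 0 ≤ hfn q i := by
  apply Finset.sum_nonneg
  intro j hj
  simp only [Finset.mem_range] at hj
  exact le_of_lt (pifn_pos (fun k hk1 hk2 => h k hk1 (by omega)))

lemma hfn_ge_one {q : ℕ → ℝ} {L : ℕ} (hL : 1 ≤ L)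
    (h : ∀ k, 1 ≤ k → k < L → 0 < q k ∧ q k < 1) : 1 ≤ hfn q L := by
  have h0 : pifn q 0 = 1 := pifn_zero q
  have : ∀ j ∈ Finset.range L, 0 ≤ pifn q j := fun j hj => by
    simp only [Finset.mem_range] at hj
    exact le_of_lt (pifn_pos (fun k hk1 hk2 => h k hk1 (by omega)))
  calc (1:ℝ) = pifn q 0 := h0.symm
  _ ≤ ∑ j ∈ Finset.range L, pifn q j :=
      Finset.single_le_sum this (Finset.mem_range.mpr hL)
  _ = hfn q L := rfl

/-- harmonicity: for `1 ≤ j` with `q j ≠ 0`,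
`q j * h (j+1) + (1 - q j) * h (j-1) = h j`. -/
lemma hfn_harmonic {q : ℕ → ℝ} {j : ℕ} (hj : 1 ≤ j) (hq : q j ≠ 0) :
    q j * hfn q (j + 1) + (1 - q j) * hfn q (j - 1) = hfn q j := by
  obtain ⟨m, rfl⟩ : ∃ m, j = m + 1 := ⟨j - 1, by omega⟩
  simp only [Nat.add_sub_cancel]
  rw [hfn_succ q (m + 1), hfn_succ q m, pifn_succ q m, rho]
  field_simp
  ring


section P5
variable {Ω : Type*} {mΩ : MeasurableSpace Ω} {P : Measure Ω} {q : ℕ → ℝ} {U : ℕ → Ω → ℝ}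
  {a L : ℕ}

lemma W_succ (n : ℕ) (ω : Ω) :
    W q U a L (n + 1) ω = stepf q L (W q U a L n ω) (U n ω) := rfl

lemma W_level_decomp (haL : a ≤ L) (n i : ℕ) :
    {ω : Ω | W q U a L (n + 1) ω = i} =
      ⋃ j ∈ Finset.range (L + 1),
        ({ω : Ω | W q U a L n ω = j} ∩ U n ⁻¹' {u : ℝ | stepf q L j u = i}) := by
  ext ω
  simp only [mem_setOf_eq, mem_iUnion, Finset.mem_range, mem_inter_iff, mem_preimage]
  constructor
  · intro h
    exact ⟨W q U a L n ω, Nat.lt_succ_of_le (W_le haL n ω), rfl, by rw [← W_succ]; exact h⟩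
  · rintro ⟨j, _, hj, hs⟩
    rw [W_succ, hj]
    exact hs

lemma measurableSet_stepf_level (q : ℕ → ℝ) (L j i : ℕ) :
    MeasurableSet {u : ℝ | stepf q L j u = i} :=
  measurable_stepf q L j (measurableSet_singleton i)

lemma measurableSet_W (haL : a ≤ L) : ∀ n i, MeasurableSet[mb U n] {ω : Ω | W q U a L n ω = i} := by
  intro n
  induction n with
  | zero =>
    intro i
    by_cases h : a = i
    · have : {ω : Ω | W q U a L 0 ω = i} = univ := by ext ω; simp [W, h]
      rw [this]; exact MeasurableSet.univ
    · have : {ω : Ω | W q U a L 0 ω = i} = ∅ := by ext ω; simp [W, h]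
      rw [this]; exact @MeasurableSet.empty _ (mb U 0)
  | succ n ih =>
    intro i
    rw [W_level_decomp haL n i]
    apply MeasurableSet.biUnion (Finset.range (L + 1) : Finset ℕ).countable_toSet
    intro j _
    apply MeasurableSet.inter
    · exact mb_mono (Nat.le_succ n) _ (ih j)
    · exact comap_le_mb (Nat.lt_succ_self n) _ ⟨_, measurableSet_stepf_level q L j i, rfl⟩

lemma measurableSet_W' (hm : ∀ n, Measurable (U n)) (haL : a ≤ L) (n i : ℕ) :
    MeasurableSet {ω : Ω | W q U a L n ω = i} :=
  mb_le hm n _ (measurableSet_W haL n i)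

end P5

/-- probability of being at level `i` at time `n`. -/
noncomputable def pp {Ω' : Type*} [MeasurableSpace Ω'] (P : Measure Ω') (q : ℕ → ℝ)
    (U : ℕ → Ω' → ℝ) (a L : ℕ) (n i : ℕ) : ℝ :=
  (P {ω : Ω' | W q U a L n ω = i}).toReal

section P5b
variable {Ω : Type*} {mΩ : MeasurableSpace Ω} {P : Measure Ω} {q : ℕ → ℝ} {U : ℕ → Ω → ℝ}
  {a L : ℕ}

lemma pp_nonneg (n i : ℕ) : 0 ≤ pp P q U a L n i := ENNReal.toReal_nonneg

lemma pp_succ (hm : ∀ n, Measurable (U n)) (haL : a ≤ L) (n i : ℕ) :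
    P {ω : Ω | W q U a L (n + 1) ω = i} =
      ∑ j ∈ Finset.range (L + 1),
        P ({ω : Ω | W q U a L n ω = j} ∩ U n ⁻¹' {u : ℝ | stepf q L j u = i}) := by
  rw [W_level_decomp haL n i]
  apply measure_biUnion_finset
  · intro j _ k _ hjk
    apply Disjoint.mono inter_subset_left inter_subset_left
    rw [Set.disjoint_left]
    intro ω h1 h2
    exact hjk ((h1 : W q U a L n ω = j).symm.trans h2)
  · intro j _
    exact ((measurableSet_W' hm haL n j).inter ((hm n) (measurableSet_stepf_level q L j i)))

end P5b

section P6
variable {Ω : Type*} {mΩ : MeasurableSpace Ω} {P : Measure Ω} {q : ℕ → ℝ} {U : ℕ → Ω → ℝ}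
  {a L : ℕ} [IsProbabilityMeasure P]

lemma stepf_absorb {j : ℕ} (h : j = 0 ∨ j = L) (u : ℝ) : stepf q L j u = j := by
  simp [stepf, h]

lemma stepf_interior {j : ℕ} (h0 : j ≠ 0) (hL : j ≠ L) (u : ℝ) :
    stepf q L j u = if u < q j then j + 1 else j - 1 := by
  simp [stepf, h0, hL]

lemma step_sum (hm : ∀ n, Measurable (U n)) (hi : iIndepFun U P)
    (hu : ∀ n, Measure.map (U n) P = volume.restrict (Set.Icc (0:ℝ) 1))
    (haL : a ≤ L) (hq : ∀ j, 1 ≤ j → j < L → 0 < q j ∧ q j < 1)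
    (n j : ℕ) (hj : j ≤ L) :
    ∑ i ∈ Finset.range (L + 1), hfn q i *
        (P ({ω : Ω | W q U a L n ω = j} ∩ U n ⁻¹' {u : ℝ | stepf q L j u = i})).toReal
      = hfn q j * pp P q U a L n j := by
  set A := {ω : Ω | W q U a L n ω = j} with hA
  by_cases habs : j = 0 ∨ j = L
  · rw [Finset.sum_eq_single j]
    · have : {u : ℝ | stepf q L j u = j} = univ := by
        ext u; simp [stepf_absorb habs u]
      rw [this]
      simp [pp, hA]
    · intro i _ hij
      have : {u : ℝ | stepf q L j u = i} = ∅ := by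
        ext u
        simp only [mem_setOf_eq, stepf_absorb habs u, mem_empty_iff_false, iff_false]
        exact fun h => hij h.symm
      rw [this]
      simp
    · intro h
      exact absurd (Finset.mem_range.mpr (by omega)) h
  · push_neg at habs
    have hj1 : 1 ≤ j := by omega
    have hjL : j < L := lt_of_le_of_ne hj habs.2
    obtain ⟨hq0, hq1⟩ := hq j hj1 hjL
    have hSiio : {u : ℝ | stepf q L j u = j + 1} = Iio (q j) := by
      ext u
      simp only [stepf_interior habs.1 habs.2, mem_setOf_eq, mem_Iio]
      split_ifs with h
      · simpa using h
      · have hne : j - 1 ≠ j + 1 := by omega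
        simp [hne, h]
    have hSici : {u : ℝ | stepf q L j u = j - 1} = Ici (q j) := by
      ext u
      simp only [stepf_interior habs.1 habs.2, mem_setOf_eq, mem_Ici]
      split_ifs with h
      · exact ⟨fun he => by omega, fun he => absurd h (not_lt.mpr he)⟩
      · simp [not_lt.mp h]
    have hAmeas : MeasurableSet[mb U n] A := measurableSet_W haL n j
    have hterm1 : (P (A ∩ U n ⁻¹' {u : ℝ | stepf q L j u = j + 1})).toReal
        = pp P q U a L n j * q j := by
      rw [hSiio, measure_inter_preimage hm hi n hAmeas measurableSet_Iio,
        measure_preimage_Iio hu hm n hq0.le hq1.le, ENNReal.toReal_mul,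
        ENNReal.toReal_ofReal hq0.le]
      rfl
    have hterm2 : (P (A ∩ U n ⁻¹' {u : ℝ | stepf q L j u = j - 1})).toReal
        = pp P q U a L n j * (1 - q j) := by
      rw [hSici, measure_inter_preimage hm hi n hAmeas measurableSet_Ici,
        measure_preimage_Ici hu hm n hq0.le hq1.le, ENNReal.toReal_mul,
        ENNReal.toReal_ofReal (by linarith)]
      rfl
    have hzero : ∀ i ∈ Finset.range (L + 1), i ∉ ({j - 1, j + 1} : Finset ℕ) →
        hfn q i * (P (A ∩ U n ⁻¹' {u : ℝ | stepf q L j u = i})).toReal = 0 := by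
      intro i _ hi
      simp only [Finset.mem_insert, Finset.mem_singleton] at hi
      push_neg at hi
      have : {u : ℝ | stepf q L j u = i} = ∅ := by
        ext u
        simp only [stepf_interior habs.1 habs.2, mem_setOf_eq, mem_empty_iff_false,
          iff_false]
        split_ifs
        · exact fun h => hi.2 h.symm
        · exact fun h => hi.1 h.symm
      rw [this]
      simp
    have hsubset : ({j - 1, j + 1} : Finset ℕ) ⊆ Finset.range (L + 1) := by
      intro x hx
      simp only [Finset.mem_insert, Finset.mem_singleton] at hx
      rcases hx with h | h <;> simp [Finset.mem_range] <;> omega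
    rw [← Finset.sum_subset hsubset hzero,
      Finset.sum_pair (by omega : j - 1 ≠ j + 1), hterm1, hterm2]
    have hharm := hfn_harmonic (q := q) hj1 hq0.ne'
    linear_combination (pp P q U a L n j) * hharm
end P6

section P7
variable {Ω : Type*} {mΩ : MeasurableSpace Ω} {P : Measure Ω} {q : ℕ → ℝ} {U : ℕ → Ω → ℝ}
  {a L : ℕ} [IsProbabilityMeasure P]

lemma expectation_eq (hm : ∀ n, Measurable (U n)) (hi : iIndepFun U P)
    (hu : ∀ n, Measure.map (U n) P = volume.restrict (Set.Icc (0:ℝ) 1))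
    (haL : a ≤ L) (hq : ∀ j, 1 ≤ j → j < L → 0 < q j ∧ q j < 1) :
    ∀ n, ∑ i ∈ Finset.range (L + 1), hfn q i * pp P q U a L n i = hfn q a := by
  intro n
  induction n with
  | zero =>
    rw [Finset.sum_eq_single a]
    · have : {ω : Ω | W q U a L 0 ω = a} = univ := by ext ω; simp [W]
      rw [pp, this]
      simp
    · intro i _ hia
      have : {ω : Ω | W q U a L 0 ω = i} = ∅ := by
        ext ω; simp [W]; exact fun h => hia h.symm
      rw [pp, this]
      simp
    · intro h
      exact absurd (Finset.mem_range.mpr (by omega)) h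
  | succ n ih =>
    have hsum : ∀ i, pp P q U a L (n + 1) i = ∑ j ∈ Finset.range (L + 1),
        (P ({ω : Ω | W q U a L n ω = j} ∩ U n ⁻¹' {u : ℝ | stepf q L j u = i})).toReal := by
      intro i
      rw [pp, pp_succ hm haL n i, ENNReal.toReal_sum]
      intro j _
      exact measure_ne_top P _
    calc ∑ i ∈ Finset.range (L + 1), hfn q i * pp P q U a L (n + 1) i
        = ∑ i ∈ Finset.range (L + 1), ∑ j ∈ Finset.range (L + 1), hfn q i *
            (P ({ω : Ω | W q U a L n ω = j} ∩ U n ⁻¹' {u : ℝ | stepf q L j u = i})).toReal := by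
          refine Finset.sum_congr rfl fun i _ => ?_
          rw [hsum i, Finset.mul_sum]
      _ = ∑ j ∈ Finset.range (L + 1), ∑ i ∈ Finset.range (L + 1), hfn q i *
            (P ({ω : Ω | W q U a L n ω = j} ∩ U n ⁻¹' {u : ℝ | stepf q L j u = i})).toReal :=
          Finset.sum_comm
      _ = ∑ j ∈ Finset.range (L + 1), hfn q j * pp P q U a L n j := by
          refine Finset.sum_congr rfl fun j hj => ?_
          exact step_sum hm hi hu haL hq n j (by simpa [Nat.lt_succ_iff] using hj)
      _ = hfn q a := ih

lemma pp_L_le (hm : ∀ n, Measurable (U n)) (hi : iIndepFun U P)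
    (hu : ∀ n, Measure.map (U n) P = volume.restrict (Set.Icc (0:ℝ) 1))
    (haL : a ≤ L) (hL : 1 ≤ L) (hq : ∀ j, 1 ≤ j → j < L → 0 < q j ∧ q j < 1) (n : ℕ) :
    pp P q U a L n L ≤ hfn q a / hfn q L := by
  have hpos : (0:ℝ) < hfn q L := lt_of_lt_of_le one_pos (hfn_ge_one hL hq)
  rw [le_div_iff₀ hpos]
  calc pp P q U a L n L * hfn q L = hfn q L * pp P q U a L n L := mul_comm _ _
    _ ≤ ∑ i ∈ Finset.range (L + 1), hfn q i * pp P q U a L n i := by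
        refine Finset.single_le_sum (f := fun i => hfn q i * pp P q U a L n i)
          (fun i hi => ?_) (Finset.mem_range.mpr (Nat.lt_succ_self L))
        exact mul_nonneg (hfn_nonneg (by simpa [Nat.lt_succ_iff] using hi) hq) (pp_nonneg n i)
    _ = hfn q a := expectation_eq hm hi hu haL hq n

theorem chain_prob_le (hm : ∀ n, Measurable (U n))
    (hi : iIndepFun U P)
    (hu : ∀ n, Measure.map (U n) P = volume.restrict (Set.Icc (0:ℝ) 1))
    (haL : a ≤ L) (hL : 1 ≤ L) (hq : ∀ j, 1 ≤ j → j < L → 0 < q j ∧ q j < 1) :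
    P {ω : Ω | hitTimeN (chain q U a) L ω < hitTimeN (chain q U a) 0 ω}
      ≤ ENNReal.ofReal (hfn q a / hfn q L) := by
  have hsub : {ω : Ω | hitTimeN (chain q U a) L ω < hitTimeN (chain q U a) 0 ω}
      ⊆ ⋃ n, {ω : Ω | W q U a L n ω = L} := by
    intro ω hω
    obtain ⟨n, hn, hmin, h0⟩ := exists_first_hit hω
    refine mem_iUnion.mpr ⟨n, ?_⟩
    show W q U a L n ω = L
    rw [W_eq_chain n ω h0 hmin]
    exact hn
  calc P {ω : Ω | hitTimeN (chain q U a) L ω < hitTimeN (chain q U a) 0 ω}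
      ≤ P (⋃ n, {ω : Ω | W q U a L n ω = L}) := measure_mono hsub
    _ = ⨆ n, P {ω : Ω | W q U a L n ω = L} :=
        Directed.measure_iUnion (W_absorb_mono.directed_le)
    _ ≤ ENNReal.ofReal (hfn q a / hfn q L) := by
        refine iSup_le fun n => ?_
        rw [← ENNReal.ofReal_toReal (measure_ne_top P _)]
        exact ENNReal.ofReal_le_ofReal (pp_L_le hm hi hu haL hL hq n)
end P7

section P8

lemma sum_range_cast (n : ℕ) : ∑ i ∈ Finset.range n, (i : ℝ) = n * (n - 1) / 2 := by
  induction n with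
  | zero => simp
  | succ n ih =>
    rw [Finset.sum_range_succ, ih]
    push_cast
    ring

lemma exp_le_inv_one_sub {t : ℝ} (h : t < 1) : Real.exp t ≤ (1 - t)⁻¹ := by
  have h1 : 1 - t ≤ Real.exp (-t) := by
    have := Real.add_one_le_exp (-t)
    linarith
  have h2 : 0 < 1 - t := by linarith
  calc Real.exp t = (Real.exp (-t))⁻¹ := by rw [Real.exp_neg, inv_inv]
    _ ≤ (1 - t)⁻¹ := by
        apply inv_anti₀ h2 h1

/-- pointwise lower bound for `rho` at an unclamped site. -/
lemma rho_lb {q : ℕ → ℝ} {k : ℕ} {x : ℝ} (hq : q k = 1 / 2 - x)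
    (hx1 : -(1/8 : ℝ) ≤ x) (hx2 : x ≤ 1/6) :
    Real.exp (3 * x + 3 * min x 0) ≤ rho q k := by
  have hden : (0:ℝ) < 1/2 - x := by linarith
  have hrho : rho q k = (1/2 + x) / (1/2 - x) := by
    rw [rho, hq]; ring_nf
  rw [hrho]
  rcases le_or_gt 0 x with hx0 | hx0
  · have hmin : min x 0 = 0 := min_eq_right hx0
    rw [hmin]
    have h3x : 3 * x < 1 := by linarith
    calc Real.exp (3 * x + 3 * 0) = Real.exp (3 * x) := by ring_nf
      _ ≤ (1 - 3 * x)⁻¹ := exp_le_inv_one_sub h3x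
      _ ≤ (1/2 + x) / (1/2 - x) := by
          rw [inv_eq_one_div, div_le_div_iff₀ (by linarith) hden]
          nlinarith
  · have hmin : min x 0 = x := min_eq_left hx0.le
    rw [hmin]
    have h6x : 6 * x < 1 := by linarith
    calc Real.exp (3 * x + 3 * x) = Real.exp (6 * x) := by ring_nf
      _ ≤ (1 - 6 * x)⁻¹ := exp_le_inv_one_sub h6x
      _ ≤ (1/2 + x) / (1/2 - x) := by
          rw [inv_eq_one_div, div_le_div_iff₀ (by linarith) hden]
          nlinarith

end P8

section P9
variable {C₁ C₂ M s : ℝ} {K : ℕ}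

set_option maxHeartbeats 1000000 in
/-- The analytic core: bounds on the harmonic-function ratio. -/
lemma ratio_bound (hC₁ : 0 < C₁) (hC₂ : 0 ≤ C₂) (hM : 8 * C₂ / C₁ ≤ M) (hMpos : 0 < M)
    (hs : 0 < s) (hK : 1 ≤ K)
    (hsmall : C₁ * M * s + C₁ / K + C₂ * s ≤ 1/8)
    (aa : ℕ) (ha : (aa : ℝ) ≤ M * s * K / 3)
    (q : ℕ → ℝ) (hqdef : ∀ i : ℕ, i ≤ ⌈M * s * (K:ℝ)⌉₊ → q i = 1/2 - C₁ * i / K + C₂ * s) :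
    (∀ j, 1 ≤ j → j < ⌈M * s * (K:ℝ)⌉₊ → 0 < q j ∧ q j < 1) ∧
    1 ≤ ⌈M * s * (K:ℝ)⌉₊ ∧ aa ≤ ⌈M * s * (K:ℝ)⌉₊ ∧
    hfn q aa / hfn q ⌈M * s * (K:ℝ)⌉₊
      ≤ (aa : ℝ) * Real.exp (1 - (9/10) * C₁ * M^2 * s^2 * K) := by
  set L := ⌈M * s * (K:ℝ)⌉₊ with hLdef
  have hKR : (1:ℝ) ≤ K := by exact_mod_cast hK
  have hKpos : (0:ℝ) < K := lt_of_lt_of_le one_pos hKR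
  have hm : (0:ℝ) < M * s * K := by positivity
  have hL0 : 0 < L := Nat.ceil_pos.mpr hm
  have hL1 : 1 ≤ L := hL0
  have hLlb : M * s * K ≤ (L:ℝ) := Nat.le_ceil _
  have hLub : (L:ℝ) ≤ M * s * K + 1 := (Nat.ceil_lt_add_one (le_of_lt hm)).le
  clear_value L
  have haL : aa ≤ L := by
    have : (aa:ℝ) ≤ (L:ℝ) := le_trans ha (by linarith)
    exact_mod_cast this
  have hC₂M : C₂ ≤ C₁ * M / 8 := by
    rw [div_le_iff₀ hC₁] at hM
    linarith
  set x : ℕ → ℝ := fun k => C₁ * k / K - C₂ * s with hxdef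
  have hq' : ∀ k, k ≤ L → q k = 1/2 - x k := by
    intro k hk
    rw [hqdef k hk]
    simp only [hxdef]
    ring
  have hC₂s : C₂ * s ≤ 1/8 := by
    have h1 : (0:ℝ) ≤ C₁ * M * s := by positivity
    have h2 : (0:ℝ) ≤ C₁ / K := by positivity
    linarith
  have hxub : ∀ k : ℕ, k ≤ L → x k ≤ 1/6 := by
    intro k hk
    have hkr : (k:ℝ) ≤ M * s * K + 1 := le_trans (by exact_mod_cast hk) hLub
    have h1 : C₁ * k / K ≤ C₁ * (M * s * K + 1) / K := by gcongr
    have h2 : C₁ * (M * s * K + 1) / K = C₁ * M * s + C₁ / K := by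
      field_simp
    have h3 : C₁ * k / K ≤ 1/8 := by
      rw [h2] at h1
      linarith [mul_nonneg hC₂ hs.le]
    simp only [hxdef]
    linarith [mul_nonneg hC₂ hs.le]
  have hxlb : ∀ k : ℕ, -(1/8 : ℝ) ≤ x k := by
    intro k
    have h1 : (0:ℝ) ≤ C₁ * k / K := by positivity
    simp only [hxdef]
    linarith
  have hqgood : ∀ j, 1 ≤ j → j < L → 0 < q j ∧ q j < 1 := by
    intro j _ hjL
    rw [hq' j hjL.le]
    constructor
    · linarith [hxub j hjL.le]
    · linarith [hxlb j]
  refine ⟨hqgood, hL1, haL, ?_⟩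
  have hpifn_pos : ∀ j, j < L → 0 < pifn q j := by
    intro j hj
    exact pifn_pos (fun k hk1 hk2 => hqgood k hk1 (by omega))
  set G : ℝ := (9/10) * C₁ * M^2 * s^2 * K with hGdef
  have hkey : ∀ j, j < aa → pifn q j ≤ pifn q (L - 1) * Real.exp (1 - G) := by
    intro j hj
    have hjL : j ≤ L - 1 := by omega
    have hjltL : j < L := by omega
    have hIcc : ∀ m : ℕ, Finset.Icc 1 m = Finset.Ioc 0 m := by
      intro m; ext k; simp only [Finset.mem_Icc, Finset.mem_Ioc]; omega
    have hsplit : pifn q j * (∏ k ∈ Finset.Ioc j (L-1), rho q k) = pifn q (L-1) := by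
      rw [pifn, pifn, hIcc, hIcc]
      exact Finset.prod_Ioc_consecutive _ (Nat.zero_le j) hjL
    have hrholb : ∀ k ∈ Finset.Ioc j (L-1),
        Real.exp (3 * x k + 3 * min (x k) 0) ≤ rho q k := by
      intro k hk
      simp only [Finset.mem_Ioc] at hk
      have hkL : k ≤ L := by omega
      exact rho_lb (hq' k hkL) (hxlb k) (hxub k hkL)
    have hprod : Real.exp (∑ k ∈ Finset.Ioc j (L-1), (3 * x k + 3 * min (x k) 0))
        ≤ ∏ k ∈ Finset.Ioc j (L-1), rho q k := by
      rw [Real.exp_sum]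
      exact Finset.prod_le_prod (fun k _ => (Real.exp_pos _).le) hrholb
    have hsumlb : G - 1 ≤ ∑ k ∈ Finset.Ioc j (L-1), (3 * x k + 3 * min (x k) 0) := by
      have hIoc : Finset.Ioc j (L-1) = Finset.Ico (j+1) L := by
        ext k; simp only [Finset.mem_Ioc, Finset.mem_Ico]; omega
      have hsumx : ∑ k ∈ Finset.Ioc j (L-1), x k =
          C₁ / K * ((L:ℝ) * ((L:ℝ) - 1) / 2 - ((j:ℝ)+1) * (j:ℝ) / 2)
            - C₂ * s * (((L - 1 - j : ℕ) : ℝ)) := by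
        have hcard : (Finset.Ioc j (L-1)).card = L - 1 - j := Nat.card_Ioc j (L-1)
        have hsk : ∑ k ∈ Finset.Ioc j (L-1), (k:ℝ)
            = (L:ℝ) * ((L:ℝ) - 1) / 2 - ((j:ℝ)+1) * (j:ℝ) / 2 := by
          rw [hIoc, Finset.sum_Ico_eq_sub _ (by omega : j + 1 ≤ L),
            sum_range_cast, sum_range_cast]
          push_cast
          ring
        calc ∑ k ∈ Finset.Ioc j (L-1), x k
            = ∑ k ∈ Finset.Ioc j (L-1), (C₁ / K * (k:ℝ) - C₂ * s) := by
              refine Finset.sum_congr rfl fun k _ => ?_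
              simp only [hxdef]; ring
          _ = C₁ / K * (∑ k ∈ Finset.Ioc j (L-1), (k:ℝ))
              - C₂ * s * ((Finset.Ioc j (L-1)).card : ℝ) := by
              rw [Finset.sum_sub_distrib, ← Finset.mul_sum, Finset.sum_const]
              simp [mul_comm]
          _ = _ := by rw [hsk, hcard]
      set c : ℝ := C₂ * s * K / C₁ with hcdef
      have hc0 : 0 ≤ c := by positivity
      have hminlb : -(C₂ * s) * (c + 1) ≤ ∑ k ∈ Finset.Ioc j (L-1), min (x k) 0 := by
        have hpt : ∀ k ∈ Finset.Ioc j (L-1),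
            (if k < ⌈c⌉₊ then -(C₂ * s) else 0) ≤ min (x k) 0 := by
          intro k _
          split_ifs with hkc
          · have h1 : -(C₂ * s) ≤ x k := by
              simp only [hxdef]
              have : (0:ℝ) ≤ C₁ * k / K := by positivity
              linarith
            have h2 : -(C₂ * s) ≤ 0 := by
              have := mul_nonneg hC₂ hs.le
              linarith
            exact le_min h1 h2
          · push_neg at hkc
            have hck : c ≤ (k:ℝ) := Nat.ceil_le.mp hkc
            have h2 : C₁ * c / K = C₂ * s := by
              rw [hcdef]; field_simp
            have h1 : C₁ * c / K ≤ C₁ * k / K := by gcongr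
            have hx0 : 0 ≤ x k := by
              simp only [hxdef]; linarith
            simp [min_eq_right hx0]
        calc -(C₂ * s) * (c + 1)
            ≤ -(C₂ * s) * (⌈c⌉₊ : ℝ) := by
              have h3 : (⌈c⌉₊ : ℝ) ≤ c + 1 := le_of_lt (Nat.ceil_lt_add_one hc0)
              have h5 := mul_le_mul_of_nonneg_left h3 (mul_nonneg hC₂ hs.le)
              linarith
          _ ≤ ∑ k ∈ Finset.Ioc j (L-1), (if k < ⌈c⌉₊ then -(C₂ * s) else 0) := by
              rw [Finset.sum_ite, Finset.sum_const_zero, add_zero, Finset.sum_const]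
              have hcardle : ((Finset.Ioc j (L-1)).filter (fun k => k < ⌈c⌉₊)).card ≤ ⌈c⌉₊ := by
                calc _ ≤ (Finset.range ⌈c⌉₊).card := by
                      apply Finset.card_le_card
                      intro k hk
                      simp only [Finset.mem_filter, Finset.mem_range] at *
                      exact hk.2
                  _ = ⌈c⌉₊ := Finset.card_range _
              have h4 : (((Finset.Ioc j (L-1)).filter (fun k => k < ⌈c⌉₊)).card : ℝ)
                  ≤ (⌈c⌉₊:ℝ) := by exact_mod_cast hcardle
              rw [nsmul_eq_mul]
              have h6 := mul_le_mul_of_nonneg_left h4 (mul_nonneg hC₂ hs.le)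
              linarith
          _ ≤ ∑ k ∈ Finset.Ioc j (L-1), min (x k) 0 := Finset.sum_le_sum hpt
      rw [Finset.sum_add_distrib, ← Finset.mul_sum, ← Finset.mul_sum, hsumx]
      have hjr : (j:ℝ) + 1 ≤ M * s * K / 3 := by
        have : (j:ℝ) + 1 ≤ (aa:ℝ) := by exact_mod_cast Nat.succ_le_of_lt hj
        linarith
      have hjr0 : (0:ℝ) ≤ (j:ℝ) := Nat.cast_nonneg j
      have hcardL : ((L - 1 - j : ℕ) : ℝ) ≤ (L:ℝ) := by
        have : (L - 1 - j : ℕ) ≤ L := le_trans (Nat.sub_le _ _) (Nat.sub_le _ _)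
        exact_mod_cast this
      have hmain : C₁ / K * ((M*s*K)^2 * (4/9) - (M*s*K) / 2 - 1/2)
          ≤ C₁ / K * ((L:ℝ) * ((L:ℝ) - 1) / 2 - ((j:ℝ)+1) * (j:ℝ) / 2) := by
        apply mul_le_mul_of_nonneg_left _ (by positivity)
        have hsq1 : M*s*(K:ℝ) * (M*s*(K:ℝ)) ≤ (L:ℝ) * (L:ℝ) :=
          mul_self_le_mul_self hm.le hLlb
        have hjm : (j:ℝ) ≤ M*s*(K:ℝ)/3 := by linarith
        have hsq2 : ((j:ℝ)+1) * (j:ℝ) ≤ (M*s*(K:ℝ)/3) * (M*s*(K:ℝ)/3) :=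
          mul_le_mul hjr hjm hjr0 (by positivity)
        linarith
      have hfrac : C₁ / K * ((M*s*K)^2 * (4/9) - (M*s*K)/2 - 1/2)
          = (4/9) * C₁ * M^2 * s^2 * K - C₁ * M * s / 2 - C₁ / K / 2 := by
        field_simp
      have hCsK : C₂ * s * (((L - 1 - j : ℕ)) : ℝ) ≤ C₂ * s * (M * s * K + 1) := by
        apply mul_le_mul_of_nonneg_left _ (mul_nonneg hC₂ hs.le)
        linarith
      have hcK : -(C₂ * s) * (c + 1) = -(C₂^2 * s^2 * K / C₁) - C₂ * s := by
        rw [hcdef]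
        field_simp
        ring
      have hCM1 : C₂ * M * s^2 * K ≤ C₁ * M^2 * s^2 * K / 8 := by
        have := mul_le_mul_of_nonneg_right hC₂M
          (show (0:ℝ) ≤ M * s^2 * K by positivity)
        nlinarith [this]
      have hCM2 : C₂^2 * s^2 * K / C₁ ≤ C₁ * M^2 * s^2 * K / 64 := by
        rw [div_le_div_iff₀ hC₁ (by norm_num : (0:ℝ) < 64)]
        have hsq : C₂ * C₂ ≤ (C₁*M/8) * (C₁*M/8) := mul_le_mul hC₂M hC₂M hC₂ (by positivity)
        have := mul_le_mul_of_nonneg_right hsq (show (0:ℝ) ≤ s^2 * K by positivity)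
        nlinarith [this]
      have herr : (3/2) * (C₁ * M * s) + (3/2) * (C₁ / K) + 6 * (C₂ * s) ≤ 1 := by
        have h1 : (0:ℝ) ≤ C₁ * M * s := by positivity
        have h2 : (0:ℝ) ≤ C₁ / K := by positivity
        have h3 : (0:ℝ) ≤ C₂ * s := mul_nonneg hC₂ hs.le
        linarith
      have hCsK2 : C₂ * s * (M*s*K+1) = C₂ * M * s^2 * K + C₂ * s := by ring
      have hX : (0:ℝ) ≤ C₁ * M^2 * s^2 * K := by positivity
      rw [hGdef]
      linarith [hminlb, hmain, hfrac, hCsK, hcK, hCM1, hCM2, herr, hCsK2, hX]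
    have hQpos : (0:ℝ) < ∏ k ∈ Finset.Ioc j (L-1), rho q k :=
      lt_of_lt_of_le (Real.exp_pos _) hprod
    have h1 : pifn q j * Real.exp (G - 1) ≤ pifn q (L-1) := by
      calc pifn q j * Real.exp (G - 1)
          ≤ pifn q j * ∏ k ∈ Finset.Ioc j (L-1), rho q k := by
            apply mul_le_mul_of_nonneg_left _ (hpifn_pos j hjltL).le
            exact le_trans (Real.exp_le_exp.mpr hsumlb) hprod
        _ = pifn q (L-1) := hsplit
    have h2 : pifn q j ≤ pifn q (L-1) / Real.exp (G - 1) :=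
      (le_div_iff₀ (Real.exp_pos _)).mpr h1
    calc pifn q j ≤ pifn q (L-1) / Real.exp (G - 1) := h2
      _ = pifn q (L-1) * Real.exp (1 - G) := by
          rw [div_eq_mul_inv, ← Real.exp_neg]
          ring_nf
  have hhfa : hfn q aa ≤ (aa:ℝ) * (pifn q (L-1) * Real.exp (1 - G)) := by
    rw [hfn]
    calc ∑ j ∈ Finset.range aa, pifn q j
        ≤ (Finset.range aa).card • (pifn q (L-1) * Real.exp (1 - G)) := by
          apply Finset.sum_le_card_nsmul
          intro j hj
          exact hkey j (Finset.mem_range.mp hj)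
      _ = (aa:ℝ) * (pifn q (L-1) * Real.exp (1 - G)) := by
          rw [Finset.card_range, nsmul_eq_mul]
  have hpL : 0 < pifn q (L-1) := hpifn_pos _ (by omega)
  have hhfL : pifn q (L-1) ≤ hfn q L := by
    rw [hfn]
    refine Finset.single_le_sum (f := fun j => pifn q j) (fun j hj => ?_)
      (Finset.mem_range.mpr (by omega))
    exact (hpifn_pos j (Finset.mem_range.mp hj)).le
  have hfa0 : 0 ≤ hfn q aa := hfn_nonneg haL hqgood
  calc hfn q aa / hfn q L
      ≤ ((aa:ℝ) * (pifn q (L-1) * Real.exp (1 - G))) / pifn q (L-1) := by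
        apply div_le_div₀ _ hhfa hpL hhfL
        exact mul_nonneg (Nat.cast_nonneg aa) (mul_nonneg hpL.le (Real.exp_pos _).le)
    _ = (aa:ℝ) * Real.exp (1 - G) := by
        field_simp
end P9

end Stmt9

namespace Stmt9

lemma clamp_eq {v : ℝ} (h0 : 0 ≤ v) (h1 : v ≤ 1) : min 1 (max 0 v) = v := by
  rw [max_eq_right h0, min_eq_right h1]

lemma tendsto_mul_exp_neg_rpow {r : ℝ} (hr : 0 < r) :
    Tendsto (fun K : ℕ => (K:ℝ) * Real.exp (-(K:ℝ) ^ r)) atTop (nhds 0) := by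
  have h1 : Tendsto (fun K : ℕ => (K:ℝ) ^ r) atTop atTop :=
    (tendsto_rpow_atTop hr).comp tendsto_natCast_atTop_atTop
  have h2 := (tendsto_rpow_mul_exp_neg_mul_atTop_nhds_zero r⁻¹ 1 one_pos).comp h1
  apply h2.congr'
  filter_upwards [eventually_ge_atTop 1] with K hK
  have hK0 : (0:ℝ) ≤ (K:ℝ) := Nat.cast_nonneg K
  have hpow : ((K:ℝ) ^ r) ^ r⁻¹ = (K:ℝ) := by
    rw [← Real.rpow_mul hK0, mul_inv_cancel₀ hr.ne', Real.rpow_one]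
  simp only [Function.comp, hpow, neg_one_mul]

section Final
variable {Ω : Type*} {mΩ : MeasurableSpace Ω} {P : Measure Ω} {q : ℕ → ℝ} {U : ℕ → Ω → ℝ}
  {a L : ℕ} [IsProbabilityMeasure P]

lemma chain_prob_toReal_le (hm : ∀ n, Measurable (U n))
    (hi : iIndepFun U P)
    (hu : ∀ n, Measure.map (U n) P = volume.restrict (Set.Icc (0:ℝ) 1))
    (haL : a ≤ L) (hL : 1 ≤ L) (hq : ∀ j, 1 ≤ j → j < L → 0 < q j ∧ q j < 1) :
    (P {ω : Ω | hitTimeN (chain q U a) L ω < hitTimeN (chain q U a) 0 ω}).toReal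
      ≤ hfn q a / hfn q L := by
  refine ENNReal.toReal_le_of_le_ofReal ?_ (chain_prob_le hm hi hu haL hL hq)
  exact div_nonneg (hfn_nonneg haL hq) (zero_le_one.trans (hfn_ge_one hL hq))

end Final
end Stmt9


set_option maxHeartbeats 1600000 in
open Stmt9 in
/-- Fix `α ∈ (0,1/2)`, a sequence `σ_K > 0` with `σ_K → 0` and `K^{1/2−α}·σ_K → ∞`, and
constants `C₁ > 0`, `C₂ ≥ 0`, `ε > 0`, `M ≥ 8·C₂/C₁`.  For each `K ≥ 1` let `(Z_n)` be
the discrete-time Markov chain on `ℕ` with `p(0,1) = 1` and, for `i ≥ 1`,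
`p(i,i+1) = q_K(i) = min(1, max(0, 1/2 − C₁·i/K + C₂·ε·σ_K))`, `p(i,i−1) = 1 − q_K(i)`,
started at `a_K`.  Then for every choice of naturals `a_K ≤ (1/3)·M·ε·σ_K·K`,
`lim_{K→∞} e^{K^{2α}} · P_{a_K}[ τ_{⌈M·ε·σ_K·K⌉} < τ_0 ] = 0`. -/
theorem stmt9 (α : ℝ) (hα : α ∈ Set.Ioo (0 : ℝ) (1 / 2))
    (σ : ℕ → ℝ) (hσpos : ∀ K, 0 < σ K)
    (hσ0 : Tendsto σ atTop (nhds 0))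
    (hσK : Tendsto (fun K : ℕ => (K : ℝ) ^ ((1 : ℝ) / 2 - α) * σ K) atTop atTop)
    (C₁ C₂ ε M : ℝ) (hC₁ : 0 < C₁) (hC₂ : 0 ≤ C₂) (hε : 0 < ε)
    (hM : 8 * C₂ / C₁ ≤ M)
    (Ω : ℕ → Type*) (mΩ : ∀ K, MeasurableSpace (Ω K))
    (P : ∀ K, Measure (Ω K)) (hP : ∀ K, IsProbabilityMeasure (P K))
    (U : ∀ K, ℕ → Ω K → ℝ) (hmeas : ∀ K n, Measurable (U K n))
    (hindep : ∀ K, iIndepFun (U K) (P K))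
    (hunif : ∀ K n, Measure.map (U K n) (P K) = volume.restrict (Set.Icc (0 : ℝ) 1))
    (a : ℕ → ℕ) (ha : ∀ K, (a K : ℝ) ≤ (1 / 3) * M * ε * σ K * K) :
    Tendsto (fun K : ℕ =>
      Real.exp ((K : ℝ) ^ (2 * α)) *
        (P K {ω | hitTimeN
              (chain (fun i : ℕ => min 1 (max 0 (1 / 2 - C₁ * i / K + C₂ * ε * σ K)))
                (U K) (a K))
              ⌈M * ε * σ K * (K : ℝ)⌉₊ ω
            < hitTimeN
              (chain (fun i : ℕ => min 1 (max 0 (1 / 2 - C₁ * i / K + C₂ * ε * σ K)))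
                (U K) (a K))
              0 ω}).toReal) atTop (nhds 0) := by
  classical
  have hMnn : 0 ≤ M := le_trans (by positivity) hM
  rcases hMnn.eq_or_lt with hMz | hMpos
  · -- degenerate case M = 0
    have hfz : ∀ K : ℕ,
        Real.exp ((K : ℝ) ^ (2 * α)) *
          (P K {ω | hitTimeN
                (chain (fun i : ℕ => min 1 (max 0 (1 / 2 - C₁ * i / K + C₂ * ε * σ K)))
                  (U K) (a K))
                ⌈M * ε * σ K * (K : ℝ)⌉₊ ω
              < hitTimeN
                (chain (fun i : ℕ => min 1 (max 0 (1 / 2 - C₁ * i / K + C₂ * ε * σ K)))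
                  (U K) (a K))
                0 ω}).toReal = 0 := by
      intro K
      have hL0 : ⌈M * ε * σ K * (K:ℝ)⌉₊ = 0 := by
        rw [← hMz]
        norm_num
      rw [hL0]
      have hset : {ω | hitTimeN
            (chain (fun i : ℕ => min 1 (max 0 (1 / 2 - C₁ * i / K + C₂ * ε * σ K)))
              (U K) (a K)) 0 ω
          < hitTimeN
            (chain (fun i : ℕ => min 1 (max 0 (1 / 2 - C₁ * i / K + C₂ * ε * σ K)))
              (U K) (a K)) 0 ω} = (∅ : Set (Ω K)) := by
        ext ω
        simp [lt_irrefl]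
      rw [hset]
      simp
    exact (tendsto_congr fun K => (hfz K).symm).mp tendsto_const_nhds
  · -- main case 0 < M
    have h2α : 0 < 2 * α := by linarith [hα.1]
    -- the dominating sequence
    have hg : Tendsto (fun K : ℕ =>
        (M * ε / 3 * Real.exp 1) * ((K:ℝ) * Real.exp (-(K:ℝ) ^ (2*α)))) atTop (nhds 0) := by
      simpa using (tendsto_mul_exp_neg_rpow h2α).const_mul (M * ε / 3 * Real.exp 1)
    -- eventual smallness
    have hsℕ : Tendsto (fun K : ℕ => ε * σ K) atTop (nhds 0) := by
      simpa using hσ0.const_mul ε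
    have hs_to0 : Tendsto (fun K : ℕ =>
        C₁ * M * (ε * σ K) + C₁ / (K:ℝ) + C₂ * (ε * σ K)) atTop (nhds 0) := by
      have h2 : Tendsto (fun K : ℕ => C₁ / (K:ℝ)) atTop (nhds 0) :=
        tendsto_const_nhds.div_atTop tendsto_natCast_atTop_atTop
      simpa using ((hsℕ.const_mul (C₁ * M)).add h2).add (hsℕ.const_mul C₂)
    have hsmall_ev : ∀ᶠ K : ℕ in atTop,
        C₁ * M * (ε * σ K) + C₁ / (K:ℝ) + C₂ * (ε * σ K) ≤ 1/8 :=
      (hs_to0.eventually_lt_const (by norm_num)).mono fun K h => h.le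
    have hσ1 : ∀ᶠ K : ℕ in atTop, σ K ≤ 1 :=
      (hσ0.eventually_lt_const one_pos).mono fun K h => h.le
    set R := Real.sqrt (20 / (9 * C₁ * M^2 * ε^2)) with hRdef
    have hT : ∀ᶠ K : ℕ in atTop, R ≤ (K:ℝ) ^ ((1:ℝ)/2 - α) * σ K :=
      hσK.eventually_ge_atTop R
    apply squeeze_zero' ?_ ?_ hg
    · exact Filter.Eventually.of_forall fun K =>
        mul_nonneg (Real.exp_pos _).le ENNReal.toReal_nonneg
    · filter_upwards [hsmall_ev, hσ1, hT, eventually_ge_atTop 1] with K hsm hσ1K hTK hK1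
      haveI := hP K
      have hKR : (1:ℝ) ≤ (K:ℝ) := by exact_mod_cast hK1
      have hKpos : (0:ℝ) < K := lt_of_lt_of_le one_pos hKR
      have hsK : 0 < ε * σ K := mul_pos hε (hσpos K)
      -- rewrite the window in terms of s = ε * σ K
      have hMes : M * ε * σ K * (K:ℝ) = M * (ε * σ K) * (K:ℝ) := by ring
      rw [hMes]
      set L := ⌈M * (ε * σ K) * (K:ℝ)⌉₊ with hLdef
      set qK : ℕ → ℝ := fun i : ℕ => min 1 (max 0 (1 / 2 - C₁ * i / K + C₂ * ε * σ K))
        with hqKdef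
      -- the clamp is inactive
      have hqdef : ∀ i : ℕ, i ≤ L →
          qK i = 1/2 - C₁ * i / K + C₂ * (ε * σ K) := by
        intro i hi
        have hCs0 : 0 ≤ C₂ * (ε * σ K) := mul_nonneg hC₂ hsK.le
        have hCMs0 : 0 ≤ C₁ * M * (ε * σ K) := by positivity
        have hCK0 : 0 ≤ C₁ / (K:ℝ) := by positivity
        have hiL : (i:ℝ) ≤ M * (ε * σ K) * (K:ℝ) + 1 := by
          have h1 : (i:ℝ) ≤ (L:ℝ) := by exact_mod_cast hi
          have h2 : (L:ℝ) ≤ M * (ε * σ K) * (K:ℝ) + 1 :=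
            (Nat.ceil_lt_add_one (by positivity)).le
          linarith
        have hCiK : C₁ * i / K ≤ 1/8 := by
          have h1 : C₁ * i / K ≤ C₁ * (M * (ε * σ K) * (K:ℝ) + 1) / K := by gcongr
          have h2 : C₁ * (M * (ε * σ K) * (K:ℝ) + 1) / K
              = C₁ * M * (ε * σ K) + C₁ / K := by field_simp
          rw [h2] at h1
          linarith
        have hCiK0 : 0 ≤ C₁ * i / K := by positivity
        have hv0 : 0 ≤ 1 / 2 - C₁ * i / K + C₂ * ε * σ K := by
          have : C₂ * ε * σ K = C₂ * (ε * σ K) := by ring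
          linarith [hCs0]
        have hv1 : 1 / 2 - C₁ * i / K + C₂ * ε * σ K ≤ 1 := by
          have h3 : C₂ * ε * σ K = C₂ * (ε * σ K) := by ring
          have h4 : C₂ * (ε * σ K) ≤ 1/8 := by linarith
          linarith
        rw [hqKdef]
        simp only []
        rw [clamp_eq hv0 hv1]
        ring
      obtain ⟨hqgood, hL1, haLK, hratio⟩ :=
        ratio_bound hC₁ hC₂ hM hMpos hsK hK1 hsm (a K)
          (by have := ha K; linarith) qK hqdef
      have hprob := chain_prob_toReal_le (P := P K) (hmeas K) (hindep K) (hunif K)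
        haLK hL1 hqgood
      -- bound G from below
      have hG2 : 2 * (K:ℝ) ^ (2*α) ≤ (9/10) * C₁ * M^2 * (ε * σ K)^2 * K := by
        have hRsq : R^2 = 20 / (9 * C₁ * M^2 * ε^2) := by
          rw [hRdef, Real.sq_sqrt (by positivity)]
        set t : ℝ := (K:ℝ) ^ ((1:ℝ)/2 - α) * σ K with htdef
        have hR0 : 0 ≤ R := Real.sqrt_nonneg _
        have ht2 : R^2 ≤ t^2 := by
          apply sq_le_sq' _ hTK
          linarith
        have hKid : ((K:ℝ) ^ ((1:ℝ)/2 - α))^2 * (K:ℝ) ^ (2*α) = (K:ℝ) := by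
          rw [← Real.rpow_natCast ((K:ℝ) ^ ((1:ℝ)/2 - α)) 2, ← Real.rpow_mul hKpos.le,
            ← Real.rpow_add hKpos,
            show ((1:ℝ)/2 - α) * (2:ℕ) + 2*α = 1 by push_cast; ring, Real.rpow_one]
        have hσ2 : t^2 * (K:ℝ) ^ (2*α) = (σ K)^2 * (K:ℝ) := by
          rw [htdef, mul_pow]
          calc ((K:ℝ)^((1:ℝ)/2 - α))^2 * (σ K)^2 * (K:ℝ)^(2*α)
              = (σ K)^2 * (((K:ℝ)^((1:ℝ)/2 - α))^2 * (K:ℝ)^(2*α)) := by ring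
            _ = (σ K)^2 * (K:ℝ) := by rw [hKid]
        have hfinal : (9/10) * C₁ * M^2 * (ε * σ K)^2 * K
            = (9/10) * C₁ * M^2 * ε^2 * ((σ K)^2 * K) := by ring
        rw [hfinal, ← hσ2]
        have hc : 2 = (9/10) * C₁ * M^2 * ε^2 * R^2 := by
          rw [hRsq]
          have hne : (9 * C₁ * M^2 * ε^2) ≠ 0 := by positivity
          field_simp
          ring
        have hmono : (9/10) * C₁ * M^2 * ε^2 * R^2 * (K:ℝ)^(2*α)
            ≤ (9/10) * C₁ * M^2 * ε^2 * t^2 * (K:ℝ)^(2*α) := by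
          have h9 : (0:ℝ) ≤ (9/10) * C₁ * M^2 * ε^2 := by positivity
          have hKp : (0:ℝ) ≤ (K:ℝ)^(2*α) := Real.rpow_nonneg hKpos.le _
          exact mul_le_mul_of_nonneg_right (mul_le_mul_of_nonneg_left ht2 h9) hKp
        calc 2 * (K:ℝ)^(2*α) = (9/10) * C₁ * M^2 * ε^2 * R^2 * (K:ℝ)^(2*α) := by
              rw [← hc]
          _ ≤ (9/10) * C₁ * M^2 * ε^2 * t^2 * (K:ℝ)^(2*α) := hmono
          _ = (9/10) * C₁ * M^2 * ε^2 * (t^2 * (K:ℝ)^(2*α)) := by ring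
      -- bound a K
      have haK : (a K : ℝ) ≤ M * ε / 3 * (K:ℝ) := by
        have h1 := ha K
        have h2 : σ K * (K:ℝ) ≤ (K:ℝ) := by
          have := mul_le_mul_of_nonneg_right hσ1K hKpos.le
          linarith
        have h3 := mul_le_mul_of_nonneg_left h2 (by positivity : (0:ℝ) ≤ M * ε / 3)
        have hr : (1/3)*M*ε*σ K*(K:ℝ) = M*ε/3*(σ K*(K:ℝ)) := by ring
        linarith
      -- final chain of inequalities
      have hexp : Real.exp ((K:ℝ)^(2*α)) *
          Real.exp (1 - (9/10) * C₁ * M^2 * (ε * σ K)^2 * K)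
          ≤ Real.exp 1 * Real.exp (-(K:ℝ)^(2*α)) := by
        rw [← Real.exp_add, ← Real.exp_add]
        apply Real.exp_le_exp.mpr
        linarith
      have haK0 : (0:ℝ) ≤ (a K : ℝ) := Nat.cast_nonneg _
      calc Real.exp ((K:ℝ)^(2*α)) *
            (P K {ω | hitTimeN (chain qK (U K) (a K)) L ω
              < hitTimeN (chain qK (U K) (a K)) 0 ω}).toReal
          ≤ Real.exp ((K:ℝ)^(2*α)) *
            ((a K : ℝ) * Real.exp (1 - (9/10) * C₁ * M^2 * (ε * σ K)^2 * K)) := by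
            apply mul_le_mul_of_nonneg_left (hprob.trans hratio) (Real.exp_pos _).le
        _ ≤ (M * ε / 3 * Real.exp 1) * ((K:ℝ) * Real.exp (-(K:ℝ)^(2*α))) := by
            have h5 : Real.exp ((K:ℝ)^(2*α)) * ((a K : ℝ) *
                Real.exp (1 - (9/10) * C₁ * M^2 * (ε * σ K)^2 * K))
                = (a K : ℝ) * (Real.exp ((K:ℝ)^(2*α)) *
                  Real.exp (1 - (9/10) * C₁ * M^2 * (ε * σ K)^2 * K)) := by ring
            rw [h5]
            have h6 : (a K : ℝ) * (Real.exp ((K:ℝ)^(2*α)) *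
                Real.exp (1 - (9/10) * C₁ * M^2 * (ε * σ K)^2 * K))
                ≤ (M * ε / 3 * (K:ℝ)) * (Real.exp 1 * Real.exp (-(K:ℝ)^(2*α))) := by
              apply mul_le_mul haK hexp (by positivity) (by positivity)
            calc _ ≤ (M * ε / 3 * (K:ℝ)) * (Real.exp 1 * Real.exp (-(K:ℝ)^(2*α))) := h6
              _ = (M * ε / 3 * Real.exp 1) * ((K:ℝ) * Real.exp (-(K:ℝ)^(2*α))) := by ring
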